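/- In a real Hilbert space H, for f₁,…,f_N ∈ H, c ∈ ℝᴺ and λ > 0 with Gram matrix S invertible, the function h ↦ ‖h‖² + λ Σᵢ(⟨fᵢ,h⟩ - cᵢ)² attains its minimum at h = Σᵢ αᵢfᵢ with α = (S + I/λ)⁻¹ c. -/

import Mathlib

open Matrix
open scoped InnerProductSpace

section Aux

lemma gram_posSemidef {H : Type*} [NormedAddCommGroup H] [InnerProductSpace ℝ H]
    (N : ℕ) (f : Fin N → H) (S : Matrix (Fin N) (Fin N) ℝ)
    (hS : ∀ i j, S i j = ⟪f i, f j⟫_ℝ) : S.PosSemidef := by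
  rw [Matrix.posSemidef_iff_dotProduct_mulVec]
  constructor
  · ext i j
    simp [Matrix.conjTranspose_apply, hS, real_inner_comm]
  · intro x
    have : (star x) ⬝ᵥ (S *ᵥ x) = ‖∑ i, x i • f i‖ ^ 2 := by
      rw [← real_inner_self_eq_norm_sq, inner_sum]
      simp only [sum_inner, real_inner_smul_left, real_inner_smul_right]
      rw [dotProduct, Finset.sum_comm]
      simp [Matrix.mulVec, dotProduct, Finset.mul_sum, hS]
      ring_nf
      apply Finset.sum_congr rfl; intro i _
      apply Finset.sum_congr rfl; intro j _
      ring
    rw [RCLike.nonneg_iff]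
    constructor
    · simp only [RCLike.re_to_real, this]; positivity
    · simp
  
lemma smul_one_posDef (N : ℕ) (t : ℝ) (ht : 0 < t) :
    (t • (1 : Matrix (Fin N) (Fin N) ℝ)).PosDef := by
  rw [Matrix.posDef_iff_dotProduct_mulVec]
  constructor
  · ext i j
    simp [Matrix.conjTranspose_apply, Matrix.one_apply]
    by_cases h : i = j <;> simp [h, Matrix.one_apply, eq_comm]
  · intro x hx
    have : (star x) ⬝ᵥ ((t • (1 : Matrix (Fin N) (Fin N) ℝ)) *ᵥ x) = t * ∑ i, (x i)^2 := by
      simp [Matrix.smul_mulVec, Matrix.one_mulVec, dotProduct, Finset.mul_sum]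
      apply Finset.sum_congr rfl; intro i _; ring
    rw [RCLike.pos_iff]
    constructor
    · simp only [RCLike.re_to_real, this]
      have hsum : 0 < ∑ i, (x i)^2 := by
        obtain ⟨i, hi⟩ := Function.ne_iff.mp hx
        apply Finset.sum_pos' (fun j _ => sq_nonneg _) ⟨i, Finset.mem_univ i, by simp only [Pi.zero_apply] at hi; positivity⟩
      exact mul_pos ht hsum
    · simp

end Aux

/-- Inexact interpolation in a real Hilbert space: for `λ > 0` and invertible
Gram matrix `S`, the function `h ↦ ‖h‖² + λ Σ (⟪fᵢ, h⟫ - cᵢ)²` attains its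
minimum at `h = Σ αᵢ fᵢ` with `α = (S + I/λ)⁻¹ c`. -/
theorem gram_inexact_interpolation
    {H : Type*} [NormedAddCommGroup H] [InnerProductSpace ℝ H] [CompleteSpace H]
    (N : ℕ) (f : Fin N → H) (c : Fin N → ℝ) (lam : ℝ) (hlam : 0 < lam)
    (S : Matrix (Fin N) (Fin N) ℝ) (hS : ∀ i j, S i j = ⟪f i, f j⟫_ℝ)
    (hinv : IsUnit S.det)
    (h₀ : H) (hh₀ : h₀ = ∑ i, ((S + lam⁻¹ • (1 : Matrix (Fin N) (Fin N) ℝ))⁻¹ *ᵥ c) i • f i) :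
    ∀ h : H,
      ‖h₀‖ ^ 2 + lam * ∑ i, (⟪f i, h₀⟫_ℝ - c i) ^ 2 ≤
        ‖h‖ ^ 2 + lam * ∑ i, (⟪f i, h⟫_ℝ - c i) ^ 2 := by
  intro h
  set A := S + lam⁻¹ • (1 : Matrix (Fin N) (Fin N) ℝ) with hA
  set α := A⁻¹ *ᵥ c with hα
  -- A is positive definite hence invertible
  have hApd : A.PosDef :=
    Matrix.PosDef.posSemidef_add (gram_posSemidef N f S hS)
      (smul_one_posDef N lam⁻¹ (by positivity))
  have hAunit : IsUnit A.det := (Matrix.isUnit_iff_isUnit_det A).mp hApd.isUnit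
  have hAc : A *ᵥ α = c := by
    rw [hα, Matrix.mulVec_mulVec, Matrix.mul_nonsing_inv A hAunit, Matrix.one_mulVec]
  -- inner products with h₀
  have hip : ∀ i, ⟪f i, h₀⟫_ℝ = ∑ j, α j * S i j := by
    intro i
    rw [hh₀, inner_sum]
    simp [real_inner_smul_right, hS]
  -- key: lam * (⟪f i, h₀⟫ - c i) = - α i
  have hkey : ∀ i, lam * (⟪f i, h₀⟫_ℝ - c i) = - α i := by
    intro i
    have := congrFun hAc i
    simp only [hA, Matrix.add_mulVec, Matrix.smul_mulVec, Matrix.one_mulVec,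
      Pi.add_apply, Pi.smul_apply, smul_eq_mul] at this
    have hSv : (S *ᵥ α) i = ∑ j, α j * S i j := by
      simp [Matrix.mulVec, dotProduct, mul_comm]
    rw [hSv] at this
    rw [hip i]
    have hln : lam ≠ 0 := ne_of_gt hlam
    have h2 : lam * ((∑ j, α j * S i j) + lam⁻¹ * α i) = lam * c i := by rw [this]
    rw [mul_add, ← mul_assoc, mul_inv_cancel₀ hln, one_mul] at h2
    linarith
  set d := h - h₀ with hd
  have hhd : h = h₀ + d := by simp [hd]
  -- expand the norm
  have hnorm : ‖h‖ ^ 2 = ‖h₀‖ ^ 2 + 2 * ⟪h₀, d⟫_ℝ + ‖d‖ ^ 2 := by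
    rw [hhd]; exact norm_add_sq_real h₀ d
  have hinner : ∀ i, ⟪f i, h⟫_ℝ = ⟪f i, h₀⟫_ℝ + ⟪f i, d⟫_ℝ := by
    intro i; rw [hhd, inner_add_right]
  -- cross term vanishes
  have hcross : ⟪h₀, d⟫_ℝ + lam * ∑ i, (⟪f i, h₀⟫_ℝ - c i) * ⟪f i, d⟫_ℝ = 0 := by
    have h1 : ⟪h₀, d⟫_ℝ = ∑ i, α i * ⟪f i, d⟫_ℝ := by
      rw [hh₀, sum_inner]
      simp [real_inner_smul_left]
    have h2 : lam * ∑ i, (⟪f i, h₀⟫_ℝ - c i) * ⟪f i, d⟫_ℝ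
        = ∑ i, (- α i) * ⟪f i, d⟫_ℝ := by
      rw [Finset.mul_sum]
      apply Finset.sum_congr rfl; intro i _
      rw [← hkey i]; ring
    rw [h1, h2, ← Finset.sum_add_distrib]
    apply Finset.sum_eq_zero; intro i _; ring
  -- expand the sum
  have hsum : ∑ i, (⟪f i, h⟫_ℝ - c i) ^ 2
      = ∑ i, (⟪f i, h₀⟫_ℝ - c i) ^ 2 + 2 * ∑ i, (⟪f i, h₀⟫_ℝ - c i) * ⟪f i, d⟫_ℝ
        + ∑ i, ⟪f i, d⟫_ℝ ^ 2 := by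
    rw [Finset.mul_sum, ← Finset.sum_add_distrib, ← Finset.sum_add_distrib]
    apply Finset.sum_congr rfl; intro i _
    rw [hinner i]; ring
  have hpos1 : (0:ℝ) ≤ ‖d‖ ^ 2 := sq_nonneg _
  have hpos2 : (0:ℝ) ≤ ∑ i, ⟪f i, d⟫_ℝ ^ 2 :=
    Finset.sum_nonneg fun i _ => sq_nonneg _
  rw [hnorm, hsum]
  nlinarith [hcross, mul_nonneg hlam.le hpos2]
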